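/- Let 0 < p < ∞, let (X, μ) and (Y, ν) be σ-finite measure spaces, let f : X → ℂ be in L^p(μ) and let g : Y → ℂ be measurable with ‖g‖_{p,∞} < ∞. Then the function h : X × Y → ℂ defined by h(x,y) = f(x)·g(y) satisfies ‖h‖_{p,∞} ≤ ‖f‖_{L^p(μ)} · ‖g‖_{p,∞}, where the weak quasi-norm of h is taken with respect to the product measure μ × ν. -/

import Mathlib

open MeasureTheory ENNReal

/-- The weak-`L^p` quasi-norm `‖h‖_{p,∞} = sup_{t>0} t · (μ {x : |h x| > t})^{1/p}`. -/
noncomputable def weakLp {X : Type*} [MeasurableSpace X] (μ : Measure X) (p : ℝ)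
    (h : X → ℂ) : ℝ≥0∞ :=
  ⨆ t ∈ Set.Ioi (0 : ℝ), ENNReal.ofReal t * μ {x | t < ‖h x‖} ^ (1 / p)

/-- Let `0 < p < ∞`, `(X, μ)` and `(Y, ν)` σ-finite, `f ∈ L^p(μ)` and `g`
measurable with `‖g‖_{p,∞} < ∞`. Then `h(x,y) = f(x)·g(y)` satisfies
`‖h‖_{p,∞} ≤ ‖f‖_{L^p(μ)} · ‖g‖_{p,∞}` with respect to the product measure `μ × ν`. -/
theorem stmt6 {X Y : Type*} [MeasurableSpace X] [MeasurableSpace Y]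
    (μ : Measure X) (ν : Measure Y) [SigmaFinite μ] [SigmaFinite ν]
    (p : ℝ) (hp : 0 < p) (f : X → ℂ) (g : Y → ℂ)
    (hf : Measurable f) (hg : Measurable g)
    (hfp : (∫⁻ x, ENNReal.ofReal (‖f x‖ ^ p) ∂μ) < ∞)
    (hgw : weakLp ν p g < ∞) :
    weakLp (μ.prod ν) p (fun z => f z.1 * g z.2) ≤
      (∫⁻ x, ENNReal.ofReal (‖f x‖ ^ p) ∂μ) ^ (1 / p) * weakLp ν p g := by
  set A := ∫⁻ x, ENNReal.ofReal (‖f x‖ ^ p) ∂μ with hA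
  set W := weakLp ν p g with hW
  rw [weakLp]
  refine iSup₂_le fun t ht => ?_
  have ht' : (0:ℝ) < t := ht
  have hWp : W ^ p ≠ ∞ := ENNReal.rpow_ne_top_of_nonneg hp.le hgw.ne
  have htne : ENNReal.ofReal t ≠ 0 := ne_of_gt (ENNReal.ofReal_pos.mpr ht')
  have htp : (ENNReal.ofReal t) ^ p ≠ ∞ := ENNReal.rpow_ne_top_of_nonneg hp.le (by simp)
  -- pointwise bound
  have key : ∀ x, (ENNReal.ofReal t) ^ p * ν {y | t < ‖f x * g y‖} ≤
      W ^ p * ENNReal.ofReal (‖f x‖ ^ p) := by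
    intro x
    by_cases hx : f x = 0
    · have : {y | t < ‖f x * g y‖} = (∅ : Set Y) := by
        ext y; simp [hx]; linarith
      rw [this, measure_empty, mul_zero]
      exact zero_le
    · have hxn : (0:ℝ) < ‖f x‖ := norm_pos_iff.mpr hx
      set s := t / ‖f x‖ with hs
      have hs' : 0 < s := div_pos ht' hxn
      have hb : ENNReal.ofReal s * ν {y | s < ‖g y‖} ^ (1 / p) ≤ W := by
        rw [hW, weakLp]
        exact le_iSup₂_of_le s hs' le_rfl
      have hset : {y | t < ‖f x * g y‖} = {y | s < ‖g y‖} := by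
        ext y
        simp only [Set.mem_setOf_eq, norm_mul, hs]
        rw [div_lt_iff₀ hxn, mul_comm]
      rw [hset]
      -- multiply hb by ofReal ‖f x‖
      have hb2 : ENNReal.ofReal t * ν {y | s < ‖g y‖} ^ (1 / p) ≤
          W * ENNReal.ofReal ‖f x‖ := by
        calc ENNReal.ofReal t * ν {y | s < ‖g y‖} ^ (1 / p)
            = (ENNReal.ofReal s * ν {y | s < ‖g y‖} ^ (1 / p)) * ENNReal.ofReal ‖f x‖ := by
              have hst : ENNReal.ofReal s * ENNReal.ofReal ‖f x‖ = ENNReal.ofReal t := by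
                rw [← ENNReal.ofReal_mul hs'.le, hs, div_mul_cancel₀ t hxn.ne']
              rw [mul_right_comm, hst]
          _ ≤ W * ENNReal.ofReal ‖f x‖ := mul_le_mul_left hb _
      have := ENNReal.rpow_le_rpow hb2 hp.le
      rw [ENNReal.mul_rpow_of_nonneg _ _ hp.le, ENNReal.mul_rpow_of_nonneg _ _ hp.le,
        ← ENNReal.rpow_mul (ν {y | s < ‖g y‖}), one_div_mul_cancel hp.ne',
        ENNReal.rpow_one, ENNReal.ofReal_rpow_of_nonneg (norm_nonneg _) hp.le] at this
      exact this
  -- measurability of the superlevel set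
  have hSm : MeasurableSet {z : X × Y | t < ‖f z.1 * g z.2‖} :=
    measurableSet_lt measurable_const ((hf.comp measurable_fst).mul
      (hg.comp measurable_snd)).norm
  have hm : (ENNReal.ofReal t) ^ p * (μ.prod ν) {z : X × Y | t < ‖f z.1 * g z.2‖} ≤
      W ^ p * A := by
    rw [Measure.prod_apply hSm, ← lintegral_const_mul' _ _ htp, hA,
      ← lintegral_const_mul' _ _ hWp]
    refine lintegral_mono fun x => ?_
    have : (Prod.mk x ⁻¹' {z : X × Y | t < ‖f z.1 * g z.2‖}) = {y | t < ‖f x * g y‖} := rfl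
    rw [this]
    exact key x
  -- conclude
  calc ENNReal.ofReal t * (μ.prod ν) {z | t < ‖(fun z : X × Y => f z.1 * g z.2) z‖} ^ (1 / p)
      = ((ENNReal.ofReal t) ^ p * (μ.prod ν) {z : X × Y | t < ‖f z.1 * g z.2‖}) ^ (1 / p) := by
        rw [ENNReal.mul_rpow_of_nonneg _ _ (by positivity : (0:ℝ) ≤ 1/p),
          ← ENNReal.rpow_mul, mul_one_div_cancel hp.ne', ENNReal.rpow_one]
    _ ≤ (W ^ p * A) ^ (1 / p) := ENNReal.rpow_le_rpow hm (by positivity)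
    _ = A ^ (1 / p) * W := by
        rw [ENNReal.mul_rpow_of_nonneg _ _ (by positivity : (0:ℝ) ≤ 1/p),
          ← ENNReal.rpow_mul, mul_one_div_cancel hp.ne', ENNReal.rpow_one, mul_comm]
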